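/- If there exists a 2-subset-regular self-complementary 3-uniform hypergraph on n vertices (with n ≥ 3), then n ≡ 2 (mod 4). -/

import Mathlib

/-- If there exists a 2-subset-regular self-complementary 3-uniform hypergraph
on `n` vertices (with `n ≥ 3`), then `n ≡ 2 (mod 4)`. -/
theorem mod_four_of_two_subset_regular_self_complementary (n : ℕ) (hn : 3 ≤ n)
    (h : ∃ E : Finset (Finset (Fin n)),
      (∀ e ∈ E, e.card = 3) ∧
      (∃ τ : Equiv.Perm (Fin n), ∀ e : Finset (Fin n), e.card = 3 →
        (e ∈ E ↔ e.image τ ∉ E)) ∧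
      (∃ lam : ℕ, ∀ s : Finset (Fin n), s.card = 2 →
        (E.filter (fun e => s ⊆ e)).card = lam)) :
    n % 4 = 2 := by
  obtain ⟨E, hcard, ⟨τ, hτ⟩, ⟨lam, hreg⟩⟩ := h
  set T3 : Finset (Finset (Fin n)) := Finset.univ.powersetCard 3 with hT3
  have hET : ∀ e ∈ E, e ∈ T3 := by
    intro e he
    simp only [hT3, Finset.mem_powersetCard]
    exact ⟨Finset.subset_univ e, hcard e he⟩
  -- (a) number of 3-subsets containing a fixed 2-set is n - 2
  have ha : ∀ s : Finset (Fin n), s.card = 2 →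
      (T3.filter (fun e => s ⊆ e)).card = n - 2 := by
    intro s hs
    have key : ((Finset.univ : Finset (Fin n)) \ s).card
        = (T3.filter (fun e => s ⊆ e)).card := by
      apply Finset.card_bij (fun u _ => insert u s)
      · intro u hu
        simp only [Finset.mem_sdiff, Finset.mem_univ, true_and] at hu
        simp only [Finset.mem_filter, hT3, Finset.mem_powersetCard]
        exact ⟨⟨Finset.subset_univ _, by rw [Finset.card_insert_of_notMem hu, hs]⟩,
          Finset.subset_insert _ _⟩
      · intro u hu u' hu' heq
        simp only [Finset.mem_sdiff, Finset.mem_univ, true_and] at hu hu'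
        have h1 : u ∈ insert u' s := heq ▸ Finset.mem_insert_self u s
        rcases Finset.mem_insert.mp h1 with h2 | h2
        · exact h2
        · exact absurd h2 hu
      · intro e he
        simp only [Finset.mem_filter, hT3, Finset.mem_powersetCard] at he
        obtain ⟨⟨-, hc⟩, hse⟩ := he
        have hcd : (e \ s).card = 1 := by
          rw [Finset.card_sdiff_of_subset hse, hc, hs]
        obtain ⟨u, hu⟩ := Finset.card_eq_one.mp hcd
        have hmem : u ∈ e \ s := hu ▸ Finset.mem_singleton_self u
        rw [Finset.mem_sdiff] at hmem
        refine ⟨u, by simp [hmem.2], ?_⟩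
        apply Finset.Subset.antisymm
        · exact Finset.insert_subset hmem.1 hse
        · intro x hx
          by_cases hxs : x ∈ s
          · exact Finset.mem_insert_of_mem hxs
          · have hx' : x ∈ e \ s := Finset.mem_sdiff.mpr ⟨hx, hxs⟩
            rw [hu, Finset.mem_singleton] at hx'
            simp [hx']
    rw [← key, Finset.card_sdiff_of_subset (Finset.subset_univ s), hs, Finset.card_univ,
      Fintype.card_fin]
  -- (c) the complement count is also lam
  have hc : ∀ s : Finset (Fin n), s.card = 2 →
      ((T3.filter (fun e => s ⊆ e)).filter (fun e => e ∉ E)).card = lam := by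
    intro s hs
    have hs' : (s.image τ).card = 2 := by
      rw [Finset.card_image_of_injective _ τ.injective, hs]
    rw [← hreg (s.image τ) hs']
    apply Finset.card_bij (fun e _ => e.image τ)
    · intro e he
      simp only [Finset.mem_filter, hT3, Finset.mem_powersetCard] at he
      obtain ⟨⟨⟨-, h3⟩, hse⟩, hne⟩ := he
      have himg : e.image τ ∈ E := by
        by_contra hni
        exact hne ((hτ e h3).mpr hni)
      simp only [Finset.mem_filter]
      exact ⟨himg, Finset.image_subset_image hse⟩
    · intro e₁ h₁ e₂ h₂ heq
      exact Finset.image_injective τ.injective heq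
    · intro f hf
      simp only [Finset.mem_filter] at hf
      obtain ⟨hfE, hsf⟩ := hf
      refine ⟨f.image τ.symm, ?_, ?_⟩
      · have h3 : (f.image τ.symm).card = 3 := by
          rw [Finset.card_image_of_injective _ τ.symm.injective, hcard f hfE]
        have himg : (f.image τ.symm).image τ = f := by
          simp [Finset.image_image]
        simp only [Finset.mem_filter, hT3, Finset.mem_powersetCard]
        refine ⟨⟨⟨Finset.subset_univ _, h3⟩, ?_⟩, ?_⟩
        · intro x hx
          have : τ x ∈ f := hsf (Finset.mem_image_of_mem τ hx)
          have := Finset.mem_image_of_mem τ.symm this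
          simpa using this
        · intro hEmem
          have hnotin := (hτ _ h3).mp hEmem
          rw [himg] at hnotin
          exact hnotin hfE
      · simp [Finset.image_image]
  -- combine: 2 * lam = n - 2
  have hsplit : ∀ s : Finset (Fin n), s.card = 2 → lam + lam = n - 2 := by
    intro s hs
    have h0 := Finset.card_filter_add_card_filter_not
      (s := T3.filter (fun e => s ⊆ e)) (p := fun e => e ∈ E)
    have h1 : (T3.filter (fun e => s ⊆ e)).filter (fun e => e ∈ E)
        = E.filter (fun e => s ⊆ e) := by
      ext e
      simp only [Finset.mem_filter]
      constructor
      · rintro ⟨⟨-, hse⟩, heE⟩; exact ⟨heE, hse⟩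
      · rintro ⟨heE, hse⟩; exact ⟨⟨hET e heE, hse⟩, heE⟩
    rw [h1, hreg s hs, hc s hs, ha s hs] at h0
    exact h0
  have h0lt : (0 : ℕ) < n := by omega
  have h1lt : (1 : ℕ) < n := by omega
  have hne : (⟨0, h0lt⟩ : Fin n) ≠ ⟨1, h1lt⟩ := by simp [Fin.ext_iff]
  have key1 : lam + lam = n - 2 :=
    hsplit {⟨0, h0lt⟩, ⟨1, h1lt⟩} (Finset.card_pair hne)
  -- (2) double counting at a vertex v
  set v : Fin n := ⟨0, h0lt⟩ with hv
  have hterm : ∀ u ∈ Finset.univ.erase v,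
      (E.filter (fun e => ({v, u} : Finset (Fin n)) ⊆ e)).card = lam := by
    intro u hu
    exact hreg _ (Finset.card_pair (fun h => (Finset.mem_erase.mp hu).1 h.symm))
  have hswap : ∑ u ∈ Finset.univ.erase v,
      (E.filter (fun e => ({v, u} : Finset (Fin n)) ⊆ e)).card
      = ∑ e ∈ E, ((Finset.univ.erase v).filter
          (fun u => ({v, u} : Finset (Fin n)) ⊆ e)).card := by
    simp only [Finset.card_filter]
    exact Finset.sum_comm
  have hinner : ∀ e ∈ E, ((Finset.univ.erase v).filter
      (fun u => ({v, u} : Finset (Fin n)) ⊆ e)).card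
      = if v ∈ e then 2 else 0 := by
    intro e he
    by_cases hve : v ∈ e
    · rw [if_pos hve]
      have heq : (Finset.univ.erase v).filter
          (fun u => ({v, u} : Finset (Fin n)) ⊆ e) = e.erase v := by
        ext u
        simp only [Finset.mem_filter, Finset.mem_erase, Finset.mem_univ, true_and,
          Finset.insert_subset_iff, Finset.singleton_subset_iff]
        tauto
      rw [heq, Finset.card_erase_of_mem hve, hcard e he]
    · rw [if_neg hve]
      rw [Finset.card_eq_zero]
      ext u
      simp only [Finset.mem_filter, Finset.insert_subset_iff, Finset.notMem_empty,
        iff_false]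
      tauto
  have key2 : (n - 1) * lam = 2 * (E.filter (fun e => v ∈ e)).card := by
    have hL : ∑ u ∈ Finset.univ.erase v,
        (E.filter (fun e => ({v, u} : Finset (Fin n)) ⊆ e)).card
        = (n - 1) * lam := by
      rw [Finset.sum_congr rfl hterm, Finset.sum_const, smul_eq_mul,
        Finset.card_erase_of_mem (Finset.mem_univ v), Finset.card_univ,
        Fintype.card_fin]
    have hR : ∑ e ∈ E, ((Finset.univ.erase v).filter
        (fun u => ({v, u} : Finset (Fin n)) ⊆ e)).card
        = 2 * (E.filter (fun e => v ∈ e)).card := by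
      rw [Finset.sum_congr rfl hinner, ← Finset.sum_filter, Finset.sum_const,
        smul_eq_mul, Nat.mul_comm]
    rw [← hL, hswap, hR]
  have hEven : Even ((n - 1) * lam) := ⟨(E.filter (fun e => v ∈ e)).card, by omega⟩
  rcases Nat.even_mul.mp hEven with ⟨r, hr⟩ | ⟨r, hr⟩ <;> omega
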